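/- Let R be a Noetherian local ring and let C• be a good complex of R-modules. Then there exists a minimal complex F• of R-modules and a quasi-isomorphism f : F• → C•. -/

import Mathlib

open CategoryTheory

section QuotientMachinery

variable (R : Type) [CommRing R]

/-- The functor `M ↦ M/IM` on `R`-modules (i.e. `- ⊗_R R/I`). -/
noncomputable def qMod (I : Ideal R) : ModuleCat R ⥤ ModuleCat R where
  obj M := ModuleCat.of R (M ⧸ (I • (⊤ : Submodule R M)))
  map {M N} f := ModuleCat.ofHom
    (Submodule.mapQ _ _ f.hom (Submodule.smul_top_le_comap_smul_top I f.hom))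
  map_id M := by
    ext x
    rfl
  map_comp {M N P} f g := by
    ext x
    rfl

instance (I : Ideal R) : (qMod R I).Additive := by
  constructor
  intro M N f g
  apply ModuleCat.hom_ext
  apply Submodule.linearMap_qext
  ext y
  rfl

/-- Reduction of a cochain complex of `R`-modules modulo an ideal `I`,
i.e. the complex `C ⊗_R R/I`. -/
noncomputable def qCx (I : Ideal R) :
    CochainComplex (ModuleCat R) ℤ ⥤ CochainComplex (ModuleCat R) ℤ :=
  (qMod R I).mapHomologicalComplex _

/-- The natural reduction map `M ⟶ M/IM`. -/
noncomputable def qPi (I : Ideal R) : 𝟭 (ModuleCat R) ⟶ qMod R I where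
  app M := ModuleCat.ofHom (Submodule.mkQ _ : M →ₗ[R] _)
  naturality M N f := by
    ext x
    rfl

/-- The natural reduction chain map `C ⟶ C ⊗_R R/I`. -/
noncomputable def qRed (I : Ideal R) (C : CochainComplex (ModuleCat R) ℤ) :
    C ⟶ (qCx R I).obj C :=
  (NatTrans.mapHomologicalComplex (qPi R I) (ComplexShape.up ℤ)).app C

end QuotientMachinery

/-- A good complex of `R`-modules: a bounded cochain complex of finitely generated
projective `R`-modules. -/
def IsGoodComplex (R : Type) [CommRing R] (C : CochainComplex (ModuleCat R) ℤ) : Prop :=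
  (∃ a b : ℤ, ∀ i : ℤ, (i < a ∨ b < i) → Limits.IsZero (C.X i)) ∧
  (∀ i : ℤ, Module.Finite R (C.X i)) ∧ (∀ i : ℤ, Module.Projective R (C.X i))

/-- A minimal complex: a good complex all of whose differentials vanish after reduction
modulo the maximal ideal, i.e. all differentials of `C ⊗_R R/𝔪_R` are zero. -/
def IsMinimalComplex (R : Type) [CommRing R] [IsLocalRing R]
    (C : CochainComplex (ModuleCat R) ℤ) : Prop :=
  IsGoodComplex R C ∧
  ∀ i j : ℤ, ((qCx R (IsLocalRing.maximalIdeal R)).obj C).d i j = 0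

open CategoryTheory IsLocalRing

section Helpers
variable {R : Type} [CommRing R]
variable {M : Type*} [AddCommGroup M] [Module R M]

/-- extract a functional taking value 1 on an element not in 𝔪M -/
lemma exists_coord [IsLocalRing R] [Module.Finite R M] [Module.Free R M] {v : M}
    (hv : v ∉ (maximalIdeal R) • (⊤ : Submodule R M)) : ∃ l : M →ₗ[R] R, l v = 1 := by
  classical
  let b := Module.Free.chooseBasis R M
  have : ∃ k, b.repr v k ∉ maximalIdeal R := by
    by_contra h
    push_neg at h
    apply hv
    rw [← b.sum_repr v]
    exact Submodule.sum_mem _ fun k _ => Submodule.smul_mem_smul (h k) trivial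
  obtain ⟨k, hk⟩ := this
  have hu : IsUnit (b.repr v k) := by
    by_contra h
    exact hk ((mem_maximalIdeal _).2 (mem_nonunits_iff.2 h))
  obtain ⟨u, hu⟩ := hu
  refine ⟨((u⁻¹ : Rˣ) : R) • (b.coord k), ?_⟩
  simp only [LinearMap.smul_apply, Module.Basis.coord_apply, ← hu, smul_eq_mul]
  exact u.inv_mul

variable (f : M →ₗ[R] R) (x : M)

/-- retraction onto the kernel of a split functional -/
noncomputable def splitKer (hx : f x = 1) : M →ₗ[R] LinearMap.ker f :=
  LinearMap.codRestrict _ (LinearMap.id - f.smulRight x)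
    (fun y => by simp [LinearMap.mem_ker, hx, mul_comm])

@[simp] lemma splitKer_apply (hx : f x = 1) (y : M) : (splitKer f x hx y : M) = y - f y • x := rfl

lemma splitKer_section (hx : f x = 1) (z : LinearMap.ker f) : splitKer f x hx (z : M) = z := by
  ext
  simp [z.2, LinearMap.mem_ker.1 z.2]

lemma ker_projective (hx : f x = 1) [Module.Projective R M] : Module.Projective R (LinearMap.ker f) :=
  Module.Projective.of_split (LinearMap.ker f).subtype (splitKer f x hx)
    (by ext z; exact congrArg Subtype.val (splitKer_section f x hx z))

lemma ker_finite (hx : f x = 1) [Module.Finite R M] : Module.Finite R (LinearMap.ker f) :=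
  Module.Finite.of_surjective (splitKer f x hx) (fun z => ⟨z, splitKer_section f x hx z⟩)

/-- the splitting equivalence -/
noncomputable def splitEquiv (hx : f x = 1) : M ≃ₗ[R] (LinearMap.ker f) × R where
  toFun y := (splitKer f x hx y, f y)
  invFun p := (p.1 : M) + p.2 • x
  left_inv y := by simp
  right_inv p := by
    ext
    · simp [LinearMap.mem_ker.1 p.1.2, hx]
    · simp [LinearMap.mem_ker.1 p.1.2, hx]
  map_add' y z := by ext <;> simp
  map_smul' r y := by ext <;> simp

lemma ker_free (hx : f x = 1) [IsLocalRing R] [Module.Finite R M] [Module.Projective R M] :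
    Module.Free R (LinearMap.ker f) := by
  have h1 := ker_finite f x hx
  have h2 := ker_projective f x hx
  have h3 : Module.FinitePresentation R (LinearMap.ker f) :=
    Module.finitePresentation_of_projective _ _
  exact Module.free_of_flat_of_isLocalRing

lemma finrank_ker (hx : f x = 1) [IsLocalRing R] [Module.Finite R M] [Module.Projective R M] :
    Module.finrank R M = Module.finrank R (LinearMap.ker f) + 1 := by
  have h1 := ker_finite f x hx
  have h2 := ker_projective f x hx
  have h4 := ker_free f x hx
  have hfree : Module.Free R M := by
    have : Module.FinitePresentation R M := Module.finitePresentation_of_projective _ _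
    exact Module.free_of_flat_of_isLocalRing
  rw [(splitEquiv f x hx).finrank_eq]
  simp [Module.finrank_prod]

end Helpers


namespace MinTest
variable {R : Type} [CommRing R] (C : CochainComplex (ModuleCat R) ℤ)

/-- subcomplex of a cochain complex of modules -/
noncomputable def subCx (A : ∀ k : ℤ, Submodule R (C.X k))
    (hA : ∀ k l (y : C.X k), y ∈ A k → C.d k l y ∈ A l) :
    CochainComplex (ModuleCat R) ℤ where
  X k := ModuleCat.of R (A k)
  d k l := ModuleCat.ofHom (LinearMap.restrict (C.d k l).hom (fun y hy => hA k l y hy))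
  shape k l h := by
    refine ModuleCat.hom_ext (LinearMap.ext fun y => ?_)
    refine Subtype.ext ?_
    show C.d k l y.1 = 0
    rw [C.shape k l h]
    rfl
  d_comp_d' k l m _ _ := by
    refine ModuleCat.hom_ext (LinearMap.ext fun y => ?_)
    refine Subtype.ext ?_
    show C.d l m (C.d k l y.1) = 0
    exact LinearMap.congr_fun (congrArg ModuleCat.Hom.hom (C.d_comp_d k l m)) y.1

noncomputable def subIota (A : ∀ k : ℤ, Submodule R (C.X k))
    (hA : ∀ k l (y : C.X k), y ∈ A k → C.d k l y ∈ A l) :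
    subCx C A hA ⟶ C where
  f k := ModuleCat.ofHom (A k).subtype
  comm' k l _ := rfl

end MinTest

namespace MinTest
section Main
variable {R : Type} [CommRing R] (C : CochainComplex (ModuleCat R) ℤ)
variable (i : ℤ) (lam : C.X (i+1) →ₗ[R] R) (x : C.X i)

/-- the composite functional `lam ∘ d`. -/
noncomputable def f0 : C.X i →ₗ[R] R := lam.comp (C.d i (i+1)).hom

noncomputable def A (k : ℤ) : Submodule R (C.X k) :=
  if h : k = i then
    (LinearMap.ker (f0 C i lam)).comap (eqToHom (congrArg C.X h) : C.X k ⟶ C.X i).hom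
  else if h : k = i+1 then
    (LinearMap.ker lam).comap (eqToHom (congrArg C.X h) : C.X k ⟶ C.X (i+1)).hom
  else ⊤

lemma A_i : A C i lam i = LinearMap.ker (f0 C i lam) := by
  simp only [A, dif_pos rfl, eqToHom_refl, ModuleCat.hom_id]
  exact Submodule.comap_id _

lemma A_isucc : A C i lam (i+1) = LinearMap.ker lam := by
  have h : (i+1 : ℤ) ≠ i := by omega
  simp only [A, dif_neg h, dif_pos rfl, eqToHom_refl, ModuleCat.hom_id]
  exact Submodule.comap_id _

lemma A_other {k : ℤ} (h1 : k ≠ i) (h2 : k ≠ i+1) : A C i lam k = ⊤ := by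
  simp [A, h1, h2]

lemma hA : ∀ k l (y : C.X k), y ∈ A C i lam k → C.d k l y ∈ A C i lam l := by
  intro k l y hy
  by_cases hrel : k + 1 = l
  · subst hrel
    by_cases h1 : k = i
    · subst h1
      rw [A_isucc]
      rw [A_i] at hy
      exact hy
    · by_cases h2 : k + 1 = i
      · subst h2
        rw [A_i]
        show lam (C.d (k+1) (k+1+1) (C.d k (k+1) y)) = 0
        have hz : (C.d (k+1) (k+1+1)) ((C.d k (k+1)) y) = 0 :=
          LinearMap.congr_fun (congrArg ModuleCat.Hom.hom (C.d_comp_d k (k+1) (k+1+1))) y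
        rw [hz, map_zero]
      · rw [A_other C i lam h2 (by omega)]
        trivial
  · rw [C.shape k l (by simpa [ComplexShape.up_Rel] using hrel)]
    exact zero_mem _
end Main
end MinTest
namespace MinTest
section Main2
variable {R : Type} [CommRing R] (C : CochainComplex (ModuleCat R) ℤ)
variable (i : ℤ) (lam : C.X (i+1) →ₗ[R] R) (x : C.X i)

/-- The subcomplex. -/
noncomputable def Fcx : CochainComplex (ModuleCat R) ℤ :=
  subCx C (A C i lam) (hA C i lam)

noncomputable def iota : Fcx C i lam ⟶ C := subIota C _ _

/-- idempotent at spot i -/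
noncomputable def pEnd : C.X i ⟶ C.X i :=
  ModuleCat.ofHom (LinearMap.id - (f0 C i lam).smulRight x : C.X i →ₗ[R] C.X i)

/-- idempotent at spot i+1 -/
noncomputable def qEnd : C.X (i+1) ⟶ C.X (i+1) :=
  ModuleCat.ofHom (LinearMap.id - lam.smulRight (C.d i (i+1) x) : C.X (i+1) →ₗ[R] C.X (i+1))

noncomputable def P (k : ℤ) : C.X k ⟶ C.X k :=
  if h : k = i then
    eqToHom (congrArg C.X h) ≫ pEnd C i lam x ≫ eqToHom (congrArg C.X h.symm)
  else if h : k = i+1 then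
    eqToHom (congrArg C.X h) ≫ qEnd C i lam x ≫ eqToHom (congrArg C.X h.symm)
  else 𝟙 _

lemma P_i : P C i lam x i = pEnd C i lam x := by
  simp [P]

lemma P_isucc : P C i lam x (i+1) = qEnd C i lam x := by
  have h : (i+1 : ℤ) ≠ i := by omega
  simp [P, h]

lemma P_other {k : ℤ} (h1 : k ≠ i) (h2 : k ≠ i+1) : P C i lam x k = 𝟙 _ := by
  simp [P, h1, h2]

lemma hP (hx : lam (C.d i (i+1) x) = 1) (k : ℤ) (y : C.X k) : P C i lam x k y ∈ A C i lam k := by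
  by_cases h1 : k = i
  · subst h1
    rw [P_i, A_i]
    show (f0 C k lam) (y - (f0 C k lam) y • x) = 0
    have : (f0 C k lam) x = 1 := hx
    simp [this, smul_eq_mul]
  · by_cases h2 : k = i+1
    · subst h2
      rw [P_isucc, A_isucc]
      show lam (y - lam y • (C.d i (i+1) x)) = 0
      simp [hx, smul_eq_mul]
    · rw [A_other C i lam h1 h2]
      trivial

lemma P_mem_fix (k : ℤ) (y : C.X k) (hy : y ∈ A C i lam k) : P C i lam x k y = y := by
  by_cases h1 : k = i
  · subst h1
    rw [A_i] at hy
    rw [P_i]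
    show y - (f0 C k lam) y • x = y
    rw [LinearMap.mem_ker.1 hy]
    simp
  · by_cases h2 : k = i+1
    · subst h2
      rw [A_isucc] at hy
      rw [P_isucc]
      show y - lam y • (C.d i (i+1) x) = y
      rw [LinearMap.mem_ker.1 hy]
      simp
    · rw [P_other C i lam x h1 h2]
      rfl

lemma P_comm (k : ℤ) (y : C.X k) :
    C.d k (k+1) (P C i lam x k y) = P C i lam x (k+1) (C.d k (k+1) y) := by
  by_cases h1 : k = i
  · subst h1
    rw [P_i, P_isucc]
    show C.d k (k+1) (y - (f0 C k lam) y • x)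
      = C.d k (k+1) y - lam (C.d k (k+1) y) • C.d k (k+1) x
    rw [map_sub, map_smul]
    rfl
  · by_cases h2 : k + 1 = i
    · subst h2
      rw [P_other C (k+1) lam x h1 (by omega), P_i]
      show C.d k (k+1) y
        = C.d k (k+1) y - (f0 C (k+1) lam) (C.d k (k+1) y) • x
      have hz : (C.d (k+1) (k+1+1)) ((C.d k (k+1)) y) = 0 :=
        LinearMap.congr_fun (congrArg ModuleCat.Hom.hom (C.d_comp_d k (k+1) (k+1+1))) y
      show C.d k (k+1) y = C.d k (k+1) y - lam ((C.d (k+1) (k+1+1)) ((C.d k (k+1)) y)) • x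
      rw [hz, map_zero, zero_smul, sub_zero]
    · by_cases h3 : k = i + 1
      · subst h3
        rw [P_isucc, P_other C i lam x (show (i+1+1 : ℤ) ≠ i by omega) (show (i+1+1 : ℤ) ≠ i + 1 by omega)]
        show C.d (i+1) (i+1+1) (y - lam y • (C.d i (i+1) x)) = C.d (i+1) (i+1+1) y
        rw [map_sub, map_smul]
        have hz : (C.d (i+1) (i+1+1)) ((C.d i (i+1)) x) = 0 :=
          LinearMap.congr_fun (congrArg ModuleCat.Hom.hom (C.d_comp_d i (i+1) (i+1+1))) x
        rw [hz, smul_zero, sub_zero]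
      · rw [P_other C i lam x h1 h3, P_other C i lam x (show k+1 ≠ i by omega) (show k+1 ≠ i+1 by omega)]
        rfl

noncomputable def piMap (hx : lam (C.d i (i+1) x) = 1) : C ⟶ Fcx C i lam where
  f k := ModuleCat.ofHom (LinearMap.codRestrict (A C i lam k) (P C i lam x k).hom (hP C i lam x hx k))
  comm' k l hkl := by
    obtain rfl : k + 1 = l := hkl
    refine ModuleCat.hom_ext (LinearMap.ext fun y => ?_)
    refine Subtype.ext ?_
    show C.d k (k+1) (P C i lam x k y) = P C i lam x (k+1) (C.d k (k+1) y)
    exact P_comm C i lam x k y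

lemma iota_pi (hx : lam (C.d i (i+1) x) = 1) : iota C i lam ≫ piMap C i lam x hx = 𝟙 (Fcx C i lam) := by
  ext k y
  exact Subtype.ext (P_mem_fix C i lam x k y.1 y.2)

end Main2
end MinTest
namespace MinTest
section Main3
variable {R : Type} [CommRing R] (C : CochainComplex (ModuleCat R) ℤ)
variable (i : ℤ) (lam : C.X (i+1) →ₗ[R] R) (x : C.X i)

noncomputable def hEnd : C.X (i+1) ⟶ C.X i :=
  ModuleCat.ofHom (-(lam.smulRight x) : C.X (i+1) →ₗ[R] C.X i)

noncomputable def hHom (k l : ℤ) : C.X k ⟶ C.X l :=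
  if h : k = i + 1 ∧ l = i then
    eqToHom (congrArg C.X h.1) ≫ hEnd C i lam x ≫ eqToHom (congrArg C.X h.2.symm)
  else 0

lemma hHom_spec : hHom C i lam x (i+1) i = hEnd C i lam x := by
  simp [hHom]

lemma hHom_other {k l : ℤ} (h : ¬(k = i + 1 ∧ l = i)) : hHom C i lam x k l = 0 :=
  dif_neg h

noncomputable def homotopy (hx : lam (C.d i (i+1) x) = 1) :
    Homotopy (piMap C i lam x hx ≫ iota C i lam) (𝟙 C) where
  hom := hHom C i lam x
  zero k l h := hHom_other C i lam x (by rintro ⟨rfl, rfl⟩; exact h rfl)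
  comm k := by
    by_cases h1 : k = i
    · subst h1
      rw [dNext_eq (hHom C k lam x) (show (ComplexShape.up ℤ).Rel k (k+1) from rfl),
        prevD_eq (hHom C k lam x) (show (ComplexShape.up ℤ).Rel (k-1) k by simp)]
      refine ModuleCat.hom_ext (LinearMap.ext fun y => ?_)
      show P C k lam x k y = (C.d k (k+1) ≫ hHom C k lam x (k+1) k) y
        + (hHom C k lam x k (k-1) ≫ C.d (k-1) k) y + y
      rw [P_i, hHom_spec, hHom_other C k lam x (fun hc => by exact absurd hc.1 (by omega))]
      show y - (f0 C k lam) y • x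
        = (hEnd C k lam x) (C.d k (k+1) y) + (C.d (k-1) k) ((0 : C.X k →ₗ[R] C.X (k-1)) y) + y
      show y - (f0 C k lam) y • x = -(lam (C.d k (k+1) y) • x) + (C.d (k-1) k) 0 + y
      rw [map_zero]
      show y - (f0 C k lam) y • x = -((f0 C k lam) y • x) + 0 + y
      abel
    · by_cases h2 : k = i + 1
      · subst h2
        rw [dNext_eq (hHom C i lam x) (show (ComplexShape.up ℤ).Rel (i+1) (i+1+1) from rfl),
          prevD_eq (hHom C i lam x) (show (ComplexShape.up ℤ).Rel i (i+1) from rfl)]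
        refine ModuleCat.hom_ext (LinearMap.ext fun y => ?_)
        show P C i lam x (i+1) y
          = (C.d (i+1) (i+1+1) ≫ hHom C i lam x (i+1+1) (i+1)) y
            + (hHom C i lam x (i+1) i ≫ C.d i (i+1)) y + y
        rw [P_isucc, hHom_other C i lam x (fun hc => by exact absurd hc.1 (by omega)),
          hHom_spec]
        show y - lam y • (C.d i (i+1) x)
          = (0 : C.X (i+1+1) →ₗ[R] C.X (i+1)) (C.d (i+1) (i+1+1) y)
            + (C.d i (i+1)) ((hEnd C i lam x) y) + y
        rw [LinearMap.zero_apply]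
        show y - lam y • (C.d i (i+1) x) = 0 + (C.d i (i+1)) (-(lam y • x)) + y
        rw [map_neg, map_smul]
        abel
      · rw [dNext_eq (hHom C i lam x) (show (ComplexShape.up ℤ).Rel k (k+1) from rfl),
          prevD_eq (hHom C i lam x) (show (ComplexShape.up ℤ).Rel (k-1) k by simp)]
        refine ModuleCat.hom_ext (LinearMap.ext fun y => ?_)
        show P C i lam x k y = (C.d k (k+1) ≫ hHom C i lam x (k+1) k) y
          + (hHom C i lam x k (k-1) ≫ C.d (k-1) k) y + y
        rw [P_other C i lam x h1 h2,
          hHom_other C i lam x (fun hc => by exact absurd hc.1 (by omega)),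
          hHom_other C i lam x (fun hc => by exact absurd hc.1 h2)]
        show y = (0 : C.X (k+1) →ₗ[R] C.X k) (C.d k (k+1) y)
          + (C.d (k-1) k) ((0 : C.X k →ₗ[R] C.X (k-1)) y) + y
        rw [LinearMap.zero_apply, LinearMap.zero_apply, map_zero]
        abel

end Main3
end MinTest
namespace MinTest
section Main4
open IsLocalRing
variable {R : Type} [CommRing R] (C : CochainComplex (ModuleCat R) ℤ)
variable (i : ℤ) (lam : C.X (i+1) →ₗ[R] R) (x : C.X i)

noncomputable def homEquiv (hx : lam (C.d i (i+1) x) = 1) :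
    HomotopyEquiv (Fcx C i lam) C where
  hom := iota C i lam
  inv := piMap C i lam x hx
  homotopyHomInvId := Homotopy.ofEq (iota_pi C i lam x hx)
  homotopyInvHomId := homotopy C i lam x hx

lemma iota_quasiIso (hx : lam (C.d i (i+1) x) = 1) : QuasiIso (iota C i lam) :=
  (inferInstance : QuasiIso (homEquiv C i lam x hx).hom)

-- goodness data for Fcx
lemma Fcx_finite (hx : lam (C.d i (i+1) x) = 1)
    (hfin : ∀ k : ℤ, Module.Finite R (C.X k)) (k : ℤ) :
    Module.Finite R ((Fcx C i lam).X k) := by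
  haveI := hfin k
  show Module.Finite R (A C i lam k)
  by_cases h1 : k = i
  · subst h1
    rw [A_i]
    haveI := hfin k
    exact ker_finite (f0 C k lam) x (show f0 C k lam x = 1 from hx)
  · by_cases h2 : k = i+1
    · subst h2
      rw [A_isucc]
      exact ker_finite lam (C.d i (i+1) x) hx
    · rw [A_other C i lam h1 h2]
      exact Module.Finite.equiv (Submodule.topEquiv (R := R) (M := C.X k)).symm

lemma Fcx_projective (hx : lam (C.d i (i+1) x) = 1)
    (hproj : ∀ k : ℤ, Module.Projective R (C.X k)) (k : ℤ) :
    Module.Projective R ((Fcx C i lam).X k) := by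
  show Module.Projective R (A C i lam k)
  by_cases h1 : k = i
  · subst h1
    rw [A_i]
    haveI := hproj k
    exact ker_projective (f0 C k lam) x (show f0 C k lam x = 1 from hx)
  · by_cases h2 : k = i+1
    · subst h2
      haveI := hproj (i+1)
      rw [A_isucc]
      exact ker_projective lam (C.d i (i+1) x) hx
    · rw [A_other C i lam h1 h2]
      haveI := hproj k
      exact Module.Projective.of_equiv (Submodule.topEquiv (R := R) (M := C.X k)).symm

lemma Fcx_isZero {k : ℤ} (h : Limits.IsZero (C.X k)) :
    Limits.IsZero ((Fcx C i lam).X k) := by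
  haveI : Subsingleton (C.X k) := by
    constructor
    intro a b
    have h1 : (𝟙 (C.X k)) = 0 := h.eq_of_src _ _
    have := LinearMap.congr_fun (congrArg ModuleCat.Hom.hom h1)
    simp only [ModuleCat.hom_zero, LinearMap.zero_apply] at this
    calc a = 0 := by rw [← this a]; rfl
    _ = b := by rw [← this b]; rfl
  haveI : Subsingleton (A C i lam k) := ⟨fun a b => Subtype.ext (Subsingleton.elim _ _)⟩
  exact @ModuleCat.isZero_of_subsingleton R _ (ModuleCat.of R (A C i lam k)) ‹_›

lemma Fcx_finrank_i [IsLocalRing R] (hx : lam (C.d i (i+1) x) = 1)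
    [Module.Finite R (C.X i)] [Module.Projective R (C.X i)] :
    Module.finrank R (C.X i) = Module.finrank R ((Fcx C i lam).X i) + 1 := by
  show _ = Module.finrank R (A C i lam i) + 1
  rw [A_i]
  exact finrank_ker (f0 C i lam) x (show f0 C i lam x = 1 from hx)

lemma Fcx_finrank_isucc [IsLocalRing R] (hx : lam (C.d i (i+1) x) = 1)
    [Module.Finite R (C.X (i+1))] [Module.Projective R (C.X (i+1))] :
    Module.finrank R (C.X (i+1)) = Module.finrank R ((Fcx C i lam).X (i+1)) + 1 := by
  show _ = Module.finrank R (A C i lam (i+1)) + 1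
  rw [A_isucc]
  exact finrank_ker lam (C.d i (i+1) x) hx

lemma Fcx_finrank_other {k : ℤ} (h1 : k ≠ i) (h2 : k ≠ i+1) :
    Module.finrank R ((Fcx C i lam).X k) = Module.finrank R (C.X k) := by
  show Module.finrank R (A C i lam k) = _
  rw [A_other C i lam h1 h2]
  rw [Submodule.topEquiv.finrank_eq]

end Main4
end MinTest
namespace MinTest
section Final
open IsLocalRing Module

variable {R : Type} [CommRing R]

lemma subsingleton_of_isZero {M : ModuleCat R} (h : Limits.IsZero M) : Subsingleton M := by
  constructor
  intro a b
  have h1 : (𝟙 M) = 0 := h.eq_of_src _ _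
  have h2 := LinearMap.congr_fun (congrArg ModuleCat.Hom.hom h1)
  simp only [ModuleCat.hom_zero, LinearMap.zero_apply] at h2
  calc a = 0 := by rw [← h2 a]; rfl
  _ = b := by rw [← h2 b]; rfl

variable [IsLocalRing R]

lemma exists_unit_entry (C : CochainComplex (ModuleCat R) ℤ) (k : ℤ)
    [Module.Finite R (C.X (k+1))] [Module.Projective R (C.X (k+1))]
    (hne : ((qCx R (maximalIdeal R)).obj C).d k (k+1) ≠ 0) :
    ∃ (lam : C.X (k+1) →ₗ[R] R) (x : C.X k), lam (C.d k (k+1) x) = 1 := by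
  have h1 : ∃ y : C.X k,
      C.d k (k+1) y ∉ (maximalIdeal R) • (⊤ : Submodule R (C.X (k+1))) := by
    by_contra h
    push_neg at h
    apply hne
    refine ModuleCat.hom_ext (LinearMap.ext fun z => ?_)
    obtain ⟨y, rfl⟩ := Submodule.Quotient.mk_surjective _ z
    show Submodule.mapQ _ _ (C.d k (k+1)).hom
      (Submodule.smul_top_le_comap_smul_top _ _) (Submodule.Quotient.mk y) = 0
    rw [Submodule.mapQ_apply, Submodule.Quotient.mk_eq_zero]
    exact h y
  obtain ⟨y, hy⟩ := h1
  haveI : Module.FinitePresentation R (C.X (k+1)) :=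
    Module.finitePresentation_of_projective _ _
  haveI : Module.Free R (C.X (k+1)) := Module.free_of_flat_of_isLocalRing
  obtain ⟨l, hl⟩ := exists_coord hy
  exact ⟨l, y, hl⟩

lemma key (n : ℕ) (a b : ℤ) (C : CochainComplex (ModuleCat R) ℤ)
    (hz : ∀ k : ℤ, (k < a ∨ b < k) → Limits.IsZero (C.X k))
    (hfin : ∀ k : ℤ, Module.Finite R (C.X k))
    (hproj : ∀ k : ℤ, Module.Projective R (C.X k))
    (hsum : (Finset.Icc a b).sum (fun k => finrank R (C.X k)) ≤ n) :
    ∃ F : CochainComplex (ModuleCat R) ℤ, IsMinimalComplex R F ∧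
      ∃ f : F ⟶ C, QuasiIso f := by
  induction n using Nat.strong_induction_on generalizing C with
  | _ n ih =>
  by_cases hmin : ∀ i j : ℤ, ((qCx R (maximalIdeal R)).obj C).d i j = 0
  · exact ⟨C, ⟨⟨⟨a, b, hz⟩, hfin, hproj⟩, hmin⟩, 𝟙 C, inferInstance⟩
  · push_neg at hmin
    obtain ⟨k, l, hkl⟩ := hmin
    have hrel : k + 1 = l := by
      by_contra h
      exact hkl (HomologicalComplex.shape _ k l h)
    subst hrel
    haveI := hfin (k+1); haveI := hproj (k+1)
    haveI := hfin k; haveI := hproj k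
    obtain ⟨lam, x, hx⟩ := exists_unit_entry C k hkl
    have hki : a ≤ k ∧ k ≤ b := by
      by_contra h
      haveI := subsingleton_of_isZero (hz k (by omega))
      have : x = 0 := Subsingleton.elim _ _
      rw [this, map_zero, map_zero] at hx
      exact zero_ne_one hx
    have hki1 : a ≤ k + 1 ∧ k + 1 ≤ b := by
      by_contra h
      haveI := subsingleton_of_isZero (hz (k+1) (by omega))
      have : C.d k (k+1) x = 0 := Subsingleton.elim _ _
      rw [this, map_zero] at hx
      exact zero_ne_one hx
    set F := Fcx C k lam with hF
    have hr1 : finrank R (C.X k) = finrank R (F.X k) + 1 :=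
      Fcx_finrank_i C k lam x hx
    have hr2 : finrank R (C.X (k+1)) = finrank R (F.X (k+1)) + 1 :=
      Fcx_finrank_isucc C k lam x hx
    have hle : ∀ j ∈ Finset.Icc a b, finrank R (F.X j) ≤ finrank R (C.X j) := by
      intro j _
      by_cases h1 : j = k
      · subst h1; omega
      · by_cases h2 : j = k+1
        · subst h2; omega
        · rw [Fcx_finrank_other C k lam h1 h2]
    have hlt : (Finset.Icc a b).sum (fun j => finrank R (F.X j))
        < (Finset.Icc a b).sum (fun j => finrank R (C.X j)) :=
      Finset.sum_lt_sum hle ⟨k, Finset.mem_Icc.2 hki, by omega⟩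
    obtain ⟨G, hG, g, hg⟩ := ih ((Finset.Icc a b).sum (fun j => finrank R (F.X j)))
      (lt_of_lt_of_le hlt hsum) F
      (fun j hj => Fcx_isZero C k lam (hz j hj))
      (fun j => Fcx_finite C k lam x hx hfin j)
      (fun j => Fcx_projective C k lam x hx hproj j)
      le_rfl
    refine ⟨G, hG, g ≫ iota C k lam, ?_⟩
    haveI := iota_quasiIso C k lam x hx
    infer_instance

end Final
end MinTest

theorem statement_1 (R : Type) [CommRing R] [IsNoetherianRing R] [IsLocalRing R]
    (C : CochainComplex (ModuleCat R) ℤ) (hC : IsGoodComplex R C) :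
    ∃ F : CochainComplex (ModuleCat R) ℤ, IsMinimalComplex R F ∧
      ∃ f : F ⟶ C, QuasiIso f := by
  obtain ⟨⟨a, b, hz⟩, hfin, hproj⟩ := hC
  exact MinTest.key ((Finset.Icc a b).sum (fun k => Module.finrank R (C.X k))) a b C
    hz hfin hproj le_rfl
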